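/- Let p ∈ (1, ∞), ρ ∈ (0, (u−1)/u) where u = min{2, p}, and set N_n = ⌊2^{n^ρ}⌋. Suppose (Y_N : N ∈ ℕ) is a family of operators on ℓ^p(ℤ^d) satisfying ‖∑_{N=N_n}^{N_{n+1}−1} |Y_{N+1}f − Y_N f|‖_{ℓ^p} ≤ C_ρ n^{ρ−1} ‖f‖_{ℓ^p} for all n ≥ 1. Then for every r ∈ (2, ∞), the short variation satisfies ‖(∑_{n ≥ 0} V_r(Y_N f : N ∈ [N_n, N_{n+1}))^r)^{1/r}‖_{ℓ^p} ≤ C ‖f‖_{ℓ^p} with C independent of r and f. -/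

import Mathlib

open scoped ENNReal

/-- The `r`-variational seminorm of `a : ℕ → ℂ` over the index set `A ⊆ ℕ`. -/
noncomputable def variationSeminorm (r : ℝ) (a : ℕ → ℂ) (A : Set ℕ) : ℝ≥0∞ :=
  ⨆ (J : ℕ) (k : Fin (J + 1) → ℕ) (_ : StrictMono k) (_ : ∀ j, k j ∈ A),
    (∑ j : Fin J, ENNReal.ofReal (‖a (k j.succ) - a (k j.castSucc)‖ ^ r)) ^ (1 / r)

/-- The `ℓ^p(ℤ^d)` norm. -/
noncomputable def lpNorm (p : ℝ) {d : ℕ} (f : (Fin d → ℤ) → ℂ) : ℝ≥0∞ :=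
  (∑' x : Fin d → ℤ, ENNReal.ofReal (‖f x‖ ^ p)) ^ (1 / p)

/-- `N_n = ⌊2^{n^ρ}⌋`. -/
noncomputable def Nseq (ρ : ℝ) (n : ℕ) : ℕ := Nat.floor ((2 : ℝ) ^ ((n : ℝ) ^ ρ))

private lemma rpow_c_one_div (x : ℝ≥0∞) {c : ℝ} (hc : c ≠ 0) : (x ^ c) ^ (1 / c) = x := by
  rw [← ENNReal.rpow_mul, mul_one_div_cancel hc, ENNReal.rpow_one]

private lemma my_tsum_rpow_le {ι : Type*} (b : ι → ℝ≥0∞) {t : ℝ} (ht : 1 ≤ t) :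
    ∑' i, b i ^ t ≤ (∑' i, b i) ^ t := by
  have ht0 : (0 : ℝ) < t := lt_of_lt_of_le one_pos ht
  rcases eq_or_ne (∑' i, b i) ⊤ with h | h
  · rw [h, ENNReal.top_rpow_of_pos ht0]; exact le_top
  rcases eq_or_ne (∑' i, b i) 0 with h0 | h0
  · have hb : ∀ i, b i = 0 := ENNReal.tsum_eq_zero.mp h0
    simp [hb, ENNReal.zero_rpow_of_pos ht0]
  calc ∑' i, b i ^ t ≤ ∑' i, b i * (∑' j, b j) ^ (t - 1) := by
        refine ENNReal.tsum_le_tsum fun i => ?_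
        rcases eq_or_ne (b i) 0 with hbi | hbi
        · simp [hbi, ENNReal.zero_rpow_of_pos ht0]
        have hbit : b i ≠ ⊤ := ne_top_of_le_ne_top h (ENNReal.le_tsum i)
        have h1 : b i ^ t = b i * b i ^ (t - 1) := by
          have h2 := ENNReal.rpow_add 1 (t - 1) hbi hbit
          rw [show (1 : ℝ) + (t - 1) = t by ring, ENNReal.rpow_one] at h2
          exact h2
        rw [h1]
        exact mul_le_mul_right (ENNReal.rpow_le_rpow (ENNReal.le_tsum i) (by linarith)) _
    _ = (∑' i, b i) * (∑' j, b j) ^ (t - 1) := ENNReal.tsum_mul_right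
    _ = (∑' i, b i) ^ t := by
        have h2 := ENNReal.rpow_add 1 (t - 1) h0 h
        rw [show (1 : ℝ) + (t - 1) = t by ring, ENNReal.rpow_one] at h2
        exact h2.symm

private lemma my_sum_rpow_le {ι : Type*} (s : Finset ι) (b : ι → ℝ≥0∞) {t : ℝ} (ht : 1 ≤ t) :
    ∑ i ∈ s, b i ^ t ≤ (∑ i ∈ s, b i) ^ t := by
  rw [← Finset.tsum_subtype s (fun i => b i ^ t), ← Finset.tsum_subtype s b]
  exact my_tsum_rpow_le _ ht

private lemma my_iSup_rpow {ι : Type*} (F : ι → ℝ≥0∞) {c : ℝ} (hc : 0 < c) :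
    (⨆ i, F i) ^ c = ⨆ i, F i ^ c := by
  apply le_antisymm
  · have h1 : (⨆ i, F i) ≤ (⨆ i, F i ^ c) ^ (1 / c) := by
      refine iSup_le fun i => ?_
      have : F i = (F i ^ c) ^ (1 / c) := (rpow_c_one_div _ hc.ne').symm
      rw [this]
      exact ENNReal.rpow_le_rpow (le_iSup (fun i => F i ^ c) i) (by positivity)
    calc (⨆ i, F i) ^ c ≤ ((⨆ i, F i ^ c) ^ (1 / c)) ^ c :=
          ENNReal.rpow_le_rpow h1 hc.le
      _ = ⨆ i, F i ^ c := by
          rw [← ENNReal.rpow_mul, one_div_mul_cancel hc.ne', ENNReal.rpow_one]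
  · exact iSup_le fun i => ENNReal.rpow_le_rpow (le_iSup F i) hc.le

private lemma my_tsum_iSup_mono {ι : Type*} (H : ℕ → ι → ℝ≥0∞)
    (hH : ∀ x, Monotone fun k => H k x) :
    ∑' x, ⨆ k, H k x = ⨆ k, ∑' x, H k x := by
  refine le_antisymm ?_
    (iSup_le fun k => ENNReal.tsum_le_tsum fun x => le_iSup (fun k => H k x) k)
  rw [ENNReal.tsum_eq_iSup_sum]
  refine iSup_le fun s => ?_
  rw [ENNReal.finsetSum_iSup_of_monotone (fun x => hH x)]
  exact iSup_le fun k => le_iSup_of_le k (ENNReal.sum_le_tsum s)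

private lemma my_tsum_Lp_add {ι : Type*} (f g : ι → ℝ≥0∞) {q : ℝ} (hq : 1 ≤ q) :
    (∑' i, (f i + g i) ^ q) ^ (1 / q) ≤
      (∑' i, f i ^ q) ^ (1 / q) + (∑' i, g i ^ q) ^ (1 / q) := by
  have hq0 : (0 : ℝ) < q := lt_of_lt_of_le one_pos hq
  rw [ENNReal.tsum_eq_iSup_sum, my_iSup_rpow _ (by positivity : (0:ℝ) < 1 / q)]
  refine iSup_le fun s => ?_
  refine le_trans (ENNReal.Lp_add_le s f g hq) ?_
  gcongr <;> exact ENNReal.sum_le_tsum s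

private lemma my_tsum_Lp_sum {ι : Type*} (g : ℕ → ι → ℝ≥0∞) {q : ℝ} (hq : 1 ≤ q) (K : ℕ) :
    (∑' x, (∑ n ∈ Finset.range K, g n x) ^ q) ^ (1 / q) ≤
      ∑ n ∈ Finset.range K, (∑' x, g n x ^ q) ^ (1 / q) := by
  have hq0 : (0 : ℝ) < q := lt_of_lt_of_le one_pos hq
  induction K with
  | zero =>
    simp only [Finset.range_zero, Finset.sum_empty]
    rw [ENNReal.zero_rpow_of_pos hq0]
    rw [ENNReal.tsum_eq_zero.mpr fun _ => rfl, ENNReal.zero_rpow_of_pos (by positivity)]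
  | succ K ih =>
    simp only [Finset.sum_range_succ]
    calc (∑' x, (∑ n ∈ Finset.range K, g n x + g K x) ^ q) ^ (1 / q)
        ≤ (∑' x, (∑ n ∈ Finset.range K, g n x) ^ q) ^ (1 / q)
            + (∑' x, g K x ^ q) ^ (1 / q) := my_tsum_Lp_add _ _ hq
      _ ≤ _ := add_le_add_left ih _

private lemma my_tsum_Lp_tsum {ι : Type*} (g : ℕ → ι → ℝ≥0∞) {q : ℝ} (hq : 1 ≤ q) :
    (∑' x, (∑' n, g n x) ^ q) ^ (1 / q) ≤ ∑' n, (∑' x, g n x ^ q) ^ (1 / q) := by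
  have hq0 : (0 : ℝ) < q := lt_of_lt_of_le one_pos hq
  have key : ∀ x : ι, (∑' n, g n x) = ⨆ K, ∑ n ∈ Finset.range K, g n x := fun x =>
    ENNReal.tsum_eq_iSup_nat
  calc (∑' x, (∑' n, g n x) ^ q) ^ (1 / q)
      = (∑' x, ⨆ K, (∑ n ∈ Finset.range K, g n x) ^ q) ^ (1 / q) := by
        congr 1
        refine tsum_congr fun x => ?_
        rw [key x, my_iSup_rpow _ hq0]
    _ = (⨆ K, ∑' x, (∑ n ∈ Finset.range K, g n x) ^ q) ^ (1 / q) := by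
        rw [my_tsum_iSup_mono]
        intro x
        intro i j hij
        exact ENNReal.rpow_le_rpow
          (Finset.sum_le_sum_of_subset (Finset.range_subset_range.mpr hij)) hq0.le
    _ = ⨆ K, (∑' x, (∑ n ∈ Finset.range K, g n x) ^ q) ^ (1 / q) :=
        my_iSup_rpow _ (by positivity)
    _ ≤ ⨆ K, ∑ n ∈ Finset.range K, (∑' x, g n x ^ q) ^ (1 / q) :=
        iSup_mono fun K => my_tsum_Lp_sum g hq K
    _ ≤ ∑' n, (∑' x, g n x ^ q) ^ (1 / q) :=
        iSup_le fun K => ENNReal.sum_le_tsum _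

private lemma my_ofReal_norm_sub_le (a : ℕ → ℂ) {m n : ℕ} (h : m ≤ n) :
    ENNReal.ofReal ‖a n - a m‖ ≤
      ∑ N ∈ Finset.Ico m n, ENNReal.ofReal ‖a (N + 1) - a N‖ := by
  have hsum : a n - a m = ∑ N ∈ Finset.Ico m n, (a (N + 1) - a N) := by
    rw [Finset.sum_Ico_eq_sub _ h, Finset.sum_range_sub, Finset.sum_range_sub]
    abel
  rw [hsum]
  refine le_trans (ENNReal.ofReal_le_ofReal (norm_sum_le _ _)) ?_
  rw [ENNReal.ofReal_sum_of_nonneg (fun _ _ => norm_nonneg _)]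

private lemma my_variation_le {r : ℝ} (hr : 1 ≤ r) (a : ℕ → ℂ) (M M' : ℕ) :
    variationSeminorm r a (Set.Ico M M') ≤
      ∑ N ∈ Finset.Ico M M', ENNReal.ofReal ‖a (N + 1) - a N‖ := by
  have hr0 : (0 : ℝ) < r := lt_of_lt_of_le one_pos hr
  refine iSup_le fun J => iSup_le fun k => iSup_le fun hk => iSup_le fun hkA => ?_
  have h1 : ∀ j : Fin J, ENNReal.ofReal (‖a (k j.succ) - a (k j.castSucc)‖ ^ r)
      = ENNReal.ofReal ‖a (k j.succ) - a (k j.castSucc)‖ ^ r := fun j =>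
    (ENNReal.ofReal_rpow_of_nonneg (norm_nonneg _) hr0.le).symm
  simp only [h1]
  have hdisj : ((Finset.univ : Finset (Fin J)) : Set (Fin J)).PairwiseDisjoint
      (fun j : Fin J => Finset.Ico (k j.castSucc) (k j.succ)) := by
    intro i _ j _ hij
    simp only [Function.onFun]
    rw [Finset.disjoint_left]
    intro N hNi hNj
    rw [Finset.mem_Ico] at hNi hNj
    rcases lt_or_gt_of_ne hij with hlt | hlt
    · have hle : k i.succ ≤ k j.castSucc := hk.monotone (by
        rw [Fin.le_def, Fin.val_succ, Fin.coe_castSucc]; exact hlt)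
      omega
    · have hle : k j.succ ≤ k i.castSucc := hk.monotone (by
        rw [Fin.le_def, Fin.val_succ, Fin.coe_castSucc]; exact hlt)
      omega
  calc (∑ j : Fin J, ENNReal.ofReal ‖a (k j.succ) - a (k j.castSucc)‖ ^ r) ^ (1 / r)
      ≤ ((∑ j : Fin J, ENNReal.ofReal ‖a (k j.succ) - a (k j.castSucc)‖) ^ r) ^ (1 / r) :=
        ENNReal.rpow_le_rpow (my_sum_rpow_le _ _ hr) (by positivity)
    _ = ∑ j : Fin J, ENNReal.ofReal ‖a (k j.succ) - a (k j.castSucc)‖ :=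
        rpow_c_one_div _ hr0.ne'
    _ ≤ ∑ j : Fin J, ∑ N ∈ Finset.Ico (k j.castSucc) (k j.succ),
          ENNReal.ofReal ‖a (N + 1) - a N‖ := by
        refine Finset.sum_le_sum fun j _ => ?_
        exact my_ofReal_norm_sub_le a (hk.monotone (Fin.castSucc_le_succ j))
    _ = ∑ N ∈ (Finset.univ : Finset (Fin J)).biUnion
          (fun j => Finset.Ico (k j.castSucc) (k j.succ)),
          ENNReal.ofReal ‖a (N + 1) - a N‖ := (Finset.sum_biUnion hdisj).symm
    _ ≤ ∑ N ∈ Finset.Ico M M', ENNReal.ofReal ‖a (N + 1) - a N‖ := by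
        refine Finset.sum_le_sum_of_subset ?_
        intro N hN
        simp only [Finset.mem_biUnion, Finset.mem_Ico, Finset.mem_univ, true_and] at hN ⊢
        obtain ⟨j, hj1, hj2⟩ := hN
        have hA1 := hkA j.castSucc
        have hA2 := hkA j.succ
        rw [Set.mem_Ico] at hA1 hA2
        exact ⟨le_trans hA1.1 hj1, lt_trans hj2 hA2.2⟩

private lemma my_variation_singleton {r : ℝ} (hr : 0 < r) (a : ℕ → ℂ) :
    variationSeminorm r a (Set.Ico 1 2) = 0 := by
  refine le_antisymm ?_ zero_le
  refine iSup_le fun J => iSup_le fun k => iSup_le fun hk => iSup_le fun hkA => ?_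
  cases J with
  | zero =>
    rw [Finset.univ_eq_empty, Finset.sum_empty, ENNReal.zero_rpow_of_pos (by positivity)]
  | succ J =>
    exfalso
    have h0 := hkA 0
    have h1 := hkA (Fin.last _)
    rw [Set.mem_Ico] at h0 h1
    have hlt : k 0 < k (Fin.last _) := hk (by
      rw [Fin.lt_def]; simp [Fin.last])
    omega

theorem short_variation_estimate (d : ℕ) (p : ℝ) (hp : 1 < p)
    (ρ : ℝ) (hρ0 : 0 < ρ) (hρ : ρ < (min 2 p - 1) / min 2 p)
    (Y : ℕ → ((Fin d → ℤ) → ℂ) → ((Fin d → ℤ) → ℂ))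
    (Cρ : ℝ≥0∞) (hCρ : Cρ ≠ ⊤)
    (hY : ∀ f : (Fin d → ℤ) → ℂ, ∀ n : ℕ, 1 ≤ n →
      (∑' x : Fin d → ℤ,
          (∑ N ∈ Finset.Ico (Nseq ρ n) (Nseq ρ (n + 1)),
            ENNReal.ofReal ‖Y (N + 1) f x - Y N f x‖) ^ p) ^ (1 / p)
        ≤ Cρ * (n : ℝ≥0∞) ^ (ρ - 1) * lpNorm p f) :
    ∃ C : ℝ≥0∞, C ≠ ⊤ ∧ ∀ r : ℝ, 2 < r → ∀ f : (Fin d → ℤ) → ℂ,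
      (∑' x : Fin d → ℤ,
          (∑' n : ℕ,
            variationSeminorm r (fun N => Y N f x)
              (Set.Ico (Nseq ρ n) (Nseq ρ (n + 1))) ^ r) ^ (p / r)) ^ (1 / p)
        ≤ C * lpNorm p f := by
  set u : ℝ := min 2 p with hu_def
  have hu1 : 1 < u := lt_min one_lt_two hp
  have hu0 : (0 : ℝ) < u := by linarith
  have hup : u ≤ p := min_le_right _ _
  have hp0 : (0 : ℝ) < p := by linarith
  have hρ1 : u * (ρ - 1) < -1 := by
    have h := (lt_div_iff₀ hu0).mp hρ
    nlinarith
  have hsummable : Summable (fun n : ℕ => (n : ℝ) ^ (u * (ρ - 1))) :=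
    Real.summable_nat_rpow.mpr hρ1
  set S : ℝ≥0∞ := ∑' n : ℕ, (if n = 0 then 0 else (n : ℝ≥0∞) ^ (u * (ρ - 1))) with hS_def
  have hS_top : S ≠ ⊤ := by
    have hSe : S = ENNReal.ofReal (∑' n : ℕ, (n : ℝ) ^ (u * (ρ - 1))) := by
      rw [ENNReal.ofReal_tsum_of_nonneg (fun n => Real.rpow_nonneg (Nat.cast_nonneg n) _)
        hsummable]
      refine tsum_congr fun n => ?_
      rcases Nat.eq_zero_or_pos n with h | h
      · subst h
        simp [Real.zero_rpow (show u * (ρ - 1) ≠ 0 by nlinarith)]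
      · have hn : (0 : ℝ) < (n : ℝ) := by exact_mod_cast h
        rw [if_neg (by omega), ← ENNReal.ofReal_natCast n]
        exact ENNReal.ofReal_rpow_of_pos hn
    rw [hSe]
    exact ENNReal.ofReal_ne_top
  refine ⟨Cρ * S ^ (1 / u), ENNReal.mul_ne_top hCρ
    (ENNReal.rpow_ne_top_of_nonneg (by positivity) hS_top), ?_⟩
  intro r hr f
  have hr0 : (0 : ℝ) < r := by linarith
  have hr1 : (1 : ℝ) ≤ r := by linarith
  have hur : u ≤ r := le_trans (min_le_left _ _) hr.le
  have hq1 : 1 ≤ p / u := (one_le_div hu0).mpr hup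
  have hq0 : (0 : ℝ) < p / u := by positivity
  set Δ : ℕ → (Fin d → ℤ) → ℝ≥0∞ := fun n x =>
    if n = 0 then 0 else ∑ N ∈ Finset.Ico (Nseq ρ n) (Nseq ρ (n + 1)),
      ENNReal.ofReal ‖Y (N + 1) f x - Y N f x‖ with hΔ_def
  -- Step 1 : pointwise variation bound
  have hV : ∀ n x, variationSeminorm r (fun N => Y N f x)
      (Set.Ico (Nseq ρ n) (Nseq ρ (n + 1))) ≤ Δ n x := by
    intro n x
    cases n with
    | zero =>
      have h0 : Nseq ρ 0 = 1 := by
        simp [Nseq, Real.zero_rpow hρ0.ne', Real.rpow_zero]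
      have h1 : Nseq ρ 1 = 2 := by
        simp only [Nseq, Nat.cast_one, Real.one_rpow, Real.rpow_one]
        norm_num
      rw [h0, h1, my_variation_singleton hr0]
      exact zero_le
    | succ n =>
      rw [hΔ_def]
      simp only [Nat.succ_ne_zero, if_neg]
      exact my_variation_le hr1 _ _ _
  set b : ℕ → (Fin d → ℤ) → ℝ≥0∞ := fun n x => Δ n x ^ u with hb_def
  -- Step 2 : pointwise embedding ℓ^u ↪ ℓ^r
  have hx2 : ∀ x, (∑' n, variationSeminorm r (fun N => Y N f x)
      (Set.Ico (Nseq ρ n) (Nseq ρ (n + 1))) ^ r) ^ (p / r) ≤ (∑' n, b n x) ^ (p / u) := by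
    intro x
    have h1 : (∑' n, variationSeminorm r (fun N => Y N f x)
        (Set.Ico (Nseq ρ n) (Nseq ρ (n + 1))) ^ r) ≤ ∑' n, b n x ^ (r / u) := by
      refine ENNReal.tsum_le_tsum fun n => ?_
      have : b n x ^ (r / u) = Δ n x ^ r := by
        rw [hb_def, ← ENNReal.rpow_mul]
        congr 1
        field_simp
      rw [this]
      exact ENNReal.rpow_le_rpow (hV n x) hr0.le
    have h2 : ∑' n, b n x ^ (r / u) ≤ (∑' n, b n x) ^ (r / u) :=
      my_tsum_rpow_le _ ((one_le_div hu0).mpr hur)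
    calc (∑' n, variationSeminorm r (fun N => Y N f x)
          (Set.Ico (Nseq ρ n) (Nseq ρ (n + 1))) ^ r) ^ (p / r)
        ≤ ((∑' n, b n x) ^ (r / u)) ^ (p / r) :=
          ENNReal.rpow_le_rpow (le_trans h1 h2) (by positivity)
      _ = (∑' n, b n x) ^ (p / u) := by
          rw [← ENNReal.rpow_mul]
          congr 1
          field_simp
  -- Step 3 : per-n ℓ^p bound
  have hbound : ∀ n : ℕ, (∑' x, b n x ^ (p / u)) ^ (1 / (p / u)) ≤
      (if n = 0 then 0 else Cρ ^ u * lpNorm p f ^ u * (n : ℝ≥0∞) ^ (u * (ρ - 1))) := by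
    intro n
    have hbp : ∀ x, b n x ^ (p / u) = Δ n x ^ p := by
      intro x
      rw [hb_def, ← ENNReal.rpow_mul]
      congr 1
      field_simp
    simp only [hbp]
    cases n with
    | zero =>
      have : ∀ x, Δ 0 x ^ p = 0 := by
        intro x
        rw [hΔ_def]
        simp [ENNReal.zero_rpow_of_pos hp0]
      rw [if_pos rfl, ENNReal.tsum_eq_zero.mpr this,
        ENNReal.zero_rpow_of_pos (one_div_pos.mpr hq0)]
    | succ n =>
      rw [if_neg (Nat.succ_ne_zero n)]
      have hDe : ∀ x, Δ (n + 1) x = ∑ N ∈ Finset.Ico (Nseq ρ (n + 1)) (Nseq ρ (n + 2)),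
          ENNReal.ofReal ‖Y (N + 1) f x - Y N f x‖ := by
        intro x; rw [hΔ_def]; simp
      have hYn := hY f (n + 1) (by omega)
      have key : (∑' x, Δ (n + 1) x ^ p) ^ (1 / (p / u))
          = ((∑' x, Δ (n + 1) x ^ p) ^ (1 / p)) ^ u := by
        rw [← ENNReal.rpow_mul]
        congr 1
        field_simp
      rw [key]
      have step : (∑' x, Δ (n + 1) x ^ p) ^ (1 / p)
          ≤ Cρ * ((n : ℕ) + 1 : ℝ≥0∞) ^ (ρ - 1) * lpNorm p f := by
        simp only [hDe]
        exact_mod_cast hYn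
      calc ((∑' x, Δ (n + 1) x ^ p) ^ (1 / p)) ^ u
          ≤ (Cρ * ((n : ℕ) + 1 : ℝ≥0∞) ^ (ρ - 1) * lpNorm p f) ^ u :=
            ENNReal.rpow_le_rpow step hu0.le
        _ = Cρ ^ u * lpNorm p f ^ u * (((n : ℕ) + 1 : ℝ≥0∞)) ^ (u * (ρ - 1)) := by
            rw [ENNReal.mul_rpow_of_nonneg _ _ hu0.le,
              ENNReal.mul_rpow_of_nonneg _ _ hu0.le, ← ENNReal.rpow_mul]
            ring_nf
        _ = Cρ ^ u * lpNorm p f ^ u * (((n : ℕ) + 1 : ℕ) : ℝ≥0∞) ^ (u * (ρ - 1)) := by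
            push_cast
            ring
  -- Assemble
  calc (∑' x : Fin d → ℤ, (∑' n : ℕ, variationSeminorm r (fun N => Y N f x)
        (Set.Ico (Nseq ρ n) (Nseq ρ (n + 1))) ^ r) ^ (p / r)) ^ (1 / p)
      ≤ (∑' x, (∑' n, b n x) ^ (p / u)) ^ (1 / p) :=
        ENNReal.rpow_le_rpow (ENNReal.tsum_le_tsum hx2) (by positivity)
    _ = ((∑' x, (∑' n, b n x) ^ (p / u)) ^ (1 / (p / u))) ^ (1 / u) := by
        rw [← ENNReal.rpow_mul]
        congr 1
        field_simp
    _ ≤ (∑' n, (∑' x, b n x ^ (p / u)) ^ (1 / (p / u))) ^ (1 / u) :=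
        ENNReal.rpow_le_rpow (my_tsum_Lp_tsum b hq1) (by positivity)
    _ ≤ ((Cρ ^ u * lpNorm p f ^ u) * S) ^ (1 / u) := by
        refine ENNReal.rpow_le_rpow ?_ (by positivity)
        calc ∑' n, (∑' x, b n x ^ (p / u)) ^ (1 / (p / u))
            ≤ ∑' n : ℕ, (if n = 0 then 0 else Cρ ^ u * lpNorm p f ^ u
                * (n : ℝ≥0∞) ^ (u * (ρ - 1))) := ENNReal.tsum_le_tsum hbound
          _ = ∑' n : ℕ, (Cρ ^ u * lpNorm p f ^ u)
                * (if n = 0 then 0 else (n : ℝ≥0∞) ^ (u * (ρ - 1))) := by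
              refine tsum_congr fun n => ?_
              split <;> simp [mul_assoc]
          _ = (Cρ ^ u * lpNorm p f ^ u) * S := ENNReal.tsum_mul_left
    _ = Cρ * S ^ (1 / u) * lpNorm p f := by
        rw [ENNReal.mul_rpow_of_nonneg _ _ (by positivity),
          ENNReal.mul_rpow_of_nonneg _ _ (by positivity),
          rpow_c_one_div _ hu0.ne', rpow_c_one_div _ hu0.ne']
        ring
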